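/- Define the symmetrized fourth-power ARAP distortion on the positive orthant of ℝ³ by f₄^Sym(σ) = (1/2)·∑ᵢ₌₁³ (σᵢ − 1)⁴ + (1/2)·(σ₁σ₂σ₃)·∑ₖ₌₁³ (1/σₖ − 1)⁴. Then for every σ in the positive orthant, writing m = min(σ₁,σ₂,σ₃), one has f₄^Sym(σ) ≥ (1 − m)⁴/(2m). Consequently f₄^Sym(σ) tends to +∞ as min(σ₁,σ₂,σ₃) → 0⁺; in particular f₄^Sym blows up along every path in the positive orthant approaching (0,0,0). -/
import Mathlib


/-- The symmetrized fourth-power ARAP distortion in singular values (3D). -/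
noncomputable def f4Sym (a b c : ℝ) : ℝ :=
  (1/2) * ((a - 1)^4 + (b - 1)^4 + (c - 1)^4) +
  (1/2) * (a * b * c) * ((1 / a - 1)^4 + (1 / b - 1)^4 + (1 / c - 1)^4)

lemma f4Sym_swap1 (a b c : ℝ) : f4Sym a b c = f4Sym b a c := by
  unfold f4Sym; ring

lemma f4Sym_swap2 (a b c : ℝ) : f4Sym a b c = f4Sym c b a := by
  unfold f4Sym; ring

lemma f4Sym_key (a b c : ℝ) (ha : 0 < a) (hb : 0 < b) (hc : 0 < c)
    (hab : a ≤ b) (hac : a ≤ c) :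
    (1 - a)^4 / (2 * a) ≤ f4Sym a b c := by
  have h1 : (1 / a - 1) = (1 - a) / a := by field_simp
  have step1 : (1 - a)^4 / (2 * a) ≤ (1/2) * (a * b * c) * ((1/a - 1)^4) := by
    rw [h1, div_pow, ← mul_div_assoc,
      div_le_div_iff₀ (by positivity : (0:ℝ) < 2 * a) (by positivity : (0:ℝ) < a^4)]
    have haa : a * a ≤ b * c := mul_le_mul hab hac ha.le hb.le
    have h4 : (0:ℝ) ≤ (1 - a)^4 := by positivity
    have key2 : (1-a)^4*(a*a)*a^2 ≤ (1-a)^4*(b*c)*a^2 :=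
      mul_le_mul_of_nonneg_right (mul_le_mul_of_nonneg_left haa h4) (sq_nonneg a)
    nlinarith [key2]
  have step2 : (1/2) * (a * b * c) * ((1/a - 1)^4) ≤ f4Sym a b c := by
    unfold f4Sym
    have t1 : (0:ℝ) ≤ (1/2) * ((a - 1)^4 + (b - 1)^4 + (c - 1)^4) := by positivity
    have t2 : (0:ℝ) ≤ (1/2) * (a * b * c) * ((1 / b - 1)^4 + (1 / c - 1)^4) := by positivity
    nlinarith [t1, t2]
  linarith

lemma f4Sym_min (a b c : ℝ) (ha : 0 < a) (hb : 0 < b) (hc : 0 < c) :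
    (1 - min a (min b c))^4 / (2 * min a (min b c)) ≤ f4Sym a b c := by
  rcases le_total a (min b c) with h | h
  · rw [min_eq_left h]
    exact f4Sym_key a b c ha hb hc (le_trans h (min_le_left _ _))
      (le_trans h (min_le_right _ _))
  · rw [min_eq_right h]
    rcases le_total b c with h2 | h2
    · rw [min_eq_left h2]
      rw [f4Sym_swap1]
      have hba : b ≤ a := by rw [min_eq_left h2] at h; exact h
      exact f4Sym_key b a c hb ha hc hba h2
    · rw [min_eq_right h2]
      rw [f4Sym_swap2]
      exact f4Sym_key c b a hc hb ha h2
        (by rw [min_eq_right h2] at h; exact h)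

/-- With `m = min(σ₁,σ₂,σ₃)`, the symmetrized fourth-power ARAP
distortion satisfies `f₄^Sym(σ) ≥ (1 − m)⁴/(2m)` on the positive orthant, and
consequently blows up as `min(σ₁,σ₂,σ₃) → 0⁺`. -/
theorem statement_15 :
    (∀ a b c : ℝ, 0 < a → 0 < b → 0 < c →
      (1 - min a (min b c))^4 / (2 * min a (min b c)) ≤ f4Sym a b c) ∧
    (∀ C : ℝ, ∃ δ : ℝ, 0 < δ ∧ ∀ a b c : ℝ, 0 < a → 0 < b → 0 < c →
      min a (min b c) < δ → C ≤ f4Sym a b c) := by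
  constructor
  · exact f4Sym_min
  · intro C
    set M : ℝ := max C 1 with hMdef
    have hM : 0 < M := lt_of_lt_of_le one_pos (le_max_right _ _)
    have hCM : C ≤ M := le_max_left _ _
    refine ⟨min (1/2) (1/(32*M)), by positivity, ?_⟩
    intro a b c ha hb hc hlt
    set m : ℝ := min a (min b c) with hm
    have hm0 : 0 < m := lt_min ha (lt_min hb hc)
    have hm1 : m < 1/2 := lt_of_lt_of_le hlt (min_le_left _ _)
    have hm2 : m < 1/(32*M) := lt_of_lt_of_le hlt (min_le_right _ _)
    have hbound := f4Sym_min a b c ha hb hc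
    have h4 : (1/16 : ℝ) ≤ (1 - m)^4 := by
      have h12 : (1/2 : ℝ) ≤ 1 - m := by linarith
      nlinarith [h12, sq_nonneg (1 - m), sq_nonneg ((1-m)^2 - 1/4)]
    have hkey : C ≤ (1 - m)^4 / (2 * m) := by
      rw [le_div_iff₀ (by positivity : (0:ℝ) < 2 * m)]
      have h32 : 32 * M * m < 1 := by
        rw [lt_div_iff₀ (by positivity : (0:ℝ) < 32*M)] at hm2
        linarith
      have : C * (2 * m) ≤ M * (2 * m) := by
        apply mul_le_mul_of_nonneg_right hCM; positivity
      nlinarith [this, h32, h4]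
    linarith
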